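/- arXiv:2603.28465 — 5 statements merged into one kernel-verified Lean document; each statement's English description precedes it below -/
import Mathlib

section
/- Let A = !![a, b; c, d] be a 2×2 real matrix with trace zero (a + d = 0) and strictly negative determinant, and let B be a 2×2 real matrix with strictly positive determinant. Then the image of the special geodesic S_A under the Möbius transformation of B equals the special geodesic S_{B A B⁻¹}; that is, {w ∈ ℍ : ∃ z ∈ S_A, w = (B₀₀·z + B₀₁)/(B₁₀·z + B₁₁)} = S_{B A B⁻¹}. -/
open Matrix Complex ComplexConjugate

private lemma den_ne_zero' (r s : ℝ) (z : ℂ) (hz : z.im ≠ 0) (h : ¬(r = 0 ∧ s = 0)) :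
    (r : ℂ) * z + s ≠ 0 := by
  intro h0
  have him : r * z.im = 0 := by
    have := congrArg Complex.im h0
    simpa using this
  have hr : r = 0 := by
    rcases mul_eq_zero.1 him with h1 | h1
    · exact h1
    · exact absurd h1 hz
  have hs : (s : ℂ) = 0 := by simpa [hr] using h0
  exact h ⟨hr, by exact_mod_cast hs⟩

private lemma im_mob' (p q r s : ℝ) (z : ℂ) (hD : (r : ℂ) * z + s ≠ 0) :
    (((p : ℂ) * z + q) / ((r : ℂ) * z + s)).im
      = (p * s - q * r) * z.im / Complex.normSq ((r : ℂ) * z + s) := by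
  have hnsq : Complex.normSq ((r : ℂ) * z + s) ≠ 0 := by
    exact ne_of_gt (Complex.normSq_pos.2 hD)
  rw [Complex.div_im]
  simp only [Complex.normSq_apply, Complex.add_re, Complex.add_im, Complex.mul_re,
    Complex.mul_im, Complex.ofReal_re, Complex.ofReal_im]
  field_simp
  ring

/-- For `A = !![a, b; c, d]` real with trace zero and negative determinant,
and `B` real with positive determinant, the image of the special geodesic `S_A` under the
Möbius transformation of `B` is the special geodesic `S_{B A B⁻¹}`. -/
theorem mobius_image_special_geodesic
    (a b c d : ℝ) (A B : Matrix (Fin 2) (Fin 2) ℝ)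
    (hA : A = !![a, b; c, d]) (htrace : a + d = 0) (hdet : A.det < 0)
    (hB : 0 < B.det) :
    {w : ℂ | 0 < w.im ∧ ∃ z : ℂ,
        (0 < z.im ∧ ((a : ℂ) * z + (b : ℂ)) / ((c : ℂ) * z + (d : ℂ)) = conj z) ∧
        w = ((B 0 0 : ℂ) * z + (B 0 1 : ℂ)) / ((B 1 0 : ℂ) * z + (B 1 1 : ℂ))} =
    {w : ℂ | 0 < w.im ∧
        (((B * A * B⁻¹) 0 0 : ℂ) * w + ((B * A * B⁻¹) 0 1 : ℂ)) /
          (((B * A * B⁻¹) 1 0 : ℂ) * w + ((B * A * B⁻¹) 1 1 : ℂ)) = conj w} := by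
  obtain ⟨p, q, r, s, rfl⟩ : ∃ p q r s, B = !![p, q; r, s] :=
    ⟨B 0 0, B 0 1, B 1 0, B 1 1, Matrix.eta_fin_two B⟩
  subst hA
  rw [Matrix.det_fin_two_of] at hB hdet
  have he : p * s - q * r ≠ 0 := ne_of_gt hB
  have hdA : a * d - b * c ≠ 0 := ne_of_lt hdet
  have hcd0 : ¬(c = 0 ∧ d = 0) := by
    rintro ⟨rfl, rfl⟩; simp at hdA
  have hrs0 : ¬(r = 0 ∧ s = 0) := by
    rintro ⟨rfl, rfl⟩; simp at he
  have hrp0 : ¬(-r = 0 ∧ p = 0) := by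
    rintro ⟨hr, rfl⟩
    exact he (by simp [neg_eq_zero.1 hr])
  set a2 : ℝ := ((p * a + q * c) * s - (p * b + q * d) * r) / (p * s - q * r) with ha2
  set b2 : ℝ := (-(p * a + q * c) * q + (p * b + q * d) * p) / (p * s - q * r) with hb2
  set c2 : ℝ := ((r * a + s * c) * s - (r * b + s * d) * r) / (p * s - q * r) with hc2
  set d2 : ℝ := (-(r * a + s * c) * q + (r * b + s * d) * p) / (p * s - q * r) with hd2
  have hec : ((p : ℂ) * s - q * r) ≠ 0 := by
    intro h0
    exact he (by exact_mod_cast h0)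
  have ha2c : (a2 : ℂ) * ((p : ℂ) * s - q * r)
      = ((p : ℂ) * a + q * c) * s - ((p : ℂ) * b + q * d) * r := by
    rw [ha2]; push_cast; field_simp
  have hb2c : (b2 : ℂ) * ((p : ℂ) * s - q * r)
      = -((p : ℂ) * a + q * c) * q + ((p : ℂ) * b + q * d) * p := by
    rw [hb2]; push_cast; field_simp
  have hc2c : (c2 : ℂ) * ((p : ℂ) * s - q * r)
      = ((r : ℂ) * a + s * c) * s - ((r : ℂ) * b + s * d) * r := by
    rw [hc2]; push_cast; exact div_mul_cancel₀ _ hec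
  have hd2c : (d2 : ℂ) * ((p : ℂ) * s - q * r)
      = -((r : ℂ) * a + s * c) * q + ((r : ℂ) * b + s * d) * p := by
    rw [hd2]; push_cast; exact div_mul_cancel₀ _ hec
  have hBinv : (!![p, q; r, s] : Matrix (Fin 2) (Fin 2) ℝ)⁻¹
      = !![s / (p * s - q * r), -q / (p * s - q * r);
           -r / (p * s - q * r), p / (p * s - q * r)] := by
    rw [Matrix.inv_def, Matrix.adjugate_fin_two, Matrix.det_fin_two_of, Ring.inverse_eq_inv]
    ext i j
    fin_cases i <;> fin_cases j <;>
      simp [Matrix.smul_apply, div_eq_inv_mul] <;> ring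
  have hM : !![p, q; r, s] * !![a, b; c, d] * (!![p, q; r, s] : Matrix (Fin 2) (Fin 2) ℝ)⁻¹
      = !![a2, b2; c2, d2] := by
    rw [hBinv]
    ext i j
    fin_cases i <;> fin_cases j <;>
      · simp [Matrix.mul_apply, Fin.sum_univ_two, ha2, hb2, hc2, hd2]
        field_simp
        ring
  rw [hM]
  have hdM : a2 * d2 - b2 * c2 = a * d - b * c := by
    rw [ha2, hb2, hc2, hd2]; field_simp; ring
  have hcd20 : ¬(c2 = 0 ∧ d2 = 0) := by
    rintro ⟨h1, h2⟩
    rw [h1, h2] at hdM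
    simp at hdM
    exact hdA hdM.symm
  ext w
  simp only [Set.mem_setOf_eq, Matrix.cons_val', Matrix.cons_val_zero, Matrix.cons_val_one,
    Matrix.head_cons, Matrix.empty_val', Matrix.cons_val_fin_one, Matrix.head_fin_const,
    Matrix.of_apply]
  constructor
  · rintro ⟨hwim, z, ⟨hzim, hz⟩, hw⟩
    refine ⟨hwim, ?_⟩
    have hcd : (c : ℂ) * z + d ≠ 0 := den_ne_zero' c d z (ne_of_gt hzim) hcd0
    have hrs : (r : ℂ) * z + s ≠ 0 := den_ne_zero' r s z (ne_of_gt hzim) hrs0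
    have hrsu : (r : ℂ) * conj z + s ≠ 0 := by
      apply den_ne_zero' r s (conj z) _ hrs0
      simp [ne_of_gt hzim]
    rw [div_eq_iff hcd] at hz
    have hQ : (c : ℂ) * z * conj z + (d : ℂ) * conj z - (a : ℂ) * z - (b : ℂ) = 0 := by
      linear_combination -hz
    have hden2 : (c2 : ℂ) * w + d2 ≠ 0 := den_ne_zero' c2 d2 w (ne_of_gt hwim) hcd20
    rw [div_eq_iff hden2]
    subst hw
    have hconj : conj (((p : ℂ) * z + q) / ((r : ℂ) * z + s))
        = ((p : ℂ) * conj z + q) / ((r : ℂ) * conj z + s) := by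
      simp [map_div₀]
    rw [hconj]
    have key : ((p : ℂ) * s - q * r) *
          (((a2 : ℂ) * ((p : ℂ) * z + q) + (b2 : ℂ) * ((r : ℂ) * z + s))
            * ((r : ℂ) * conj z + s))
        = ((p : ℂ) * s - q * r) *
          (((p : ℂ) * conj z + q) *
            ((c2 : ℂ) * ((p : ℂ) * z + q) + (d2 : ℂ) * ((r : ℂ) * z + s))) := by
      linear_combination (((p : ℂ) * z + q) * ((r : ℂ) * conj z + s)) * ha2c
        + (((r : ℂ) * z + s) * ((r : ℂ) * conj z + s)) * hb2c
        - (((p : ℂ) * z + q) * ((p : ℂ) * conj z + q)) * hc2c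
        - (((p : ℂ) * conj z + q) * ((r : ℂ) * z + s)) * hd2c
        - ((p : ℂ) * s - q * r) ^ 2 * hQ
    have key2 := mul_left_cancel₀ hec key
    have h1 : (a2 : ℂ) * (((p : ℂ) * z + q) / ((r : ℂ) * z + s)) + b2
        = ((a2 : ℂ) * ((p : ℂ) * z + q) + (b2 : ℂ) * ((r : ℂ) * z + s)) / ((r : ℂ) * z + s) := by
      rw [← mul_div_assoc, div_add' _ _ _ hrs]
    have h2 : ((p : ℂ) * conj z + q) / ((r : ℂ) * conj z + s) *
          ((c2 : ℂ) * (((p : ℂ) * z + q) / ((r : ℂ) * z + s)) + d2)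
        = (((p : ℂ) * conj z + q) *
            ((c2 : ℂ) * ((p : ℂ) * z + q) + (d2 : ℂ) * ((r : ℂ) * z + s)))
          / (((r : ℂ) * conj z + s) * ((r : ℂ) * z + s)) := by
      field_simp
      try ring
    rw [h1, h2, div_eq_div_iff hrs (mul_ne_zero hrsu hrs)]
    linear_combination ((r : ℂ) * z + s) * key2
  · rintro ⟨hwim, hMob⟩
    have hden2 : (c2 : ℂ) * w + d2 ≠ 0 := den_ne_zero' c2 d2 w (ne_of_gt hwim) hcd20
    have hdenw : ((-r : ℝ) : ℂ) * w + p ≠ 0 := den_ne_zero' (-r) p w (ne_of_gt hwim) hrp0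
    obtain ⟨z, hzdef⟩ : ∃ z : ℂ,
        z = (((s : ℝ) : ℂ) * w + ((-q : ℝ) : ℂ)) / (((-r : ℝ) : ℂ) * w + ((p : ℝ) : ℂ)) :=
      ⟨_, rfl⟩
    have hzim : 0 < z.im := by
      rw [hzdef, im_mob' s (-q) (-r) p w hdenw]
      have h1 : s * p - -q * -r = p * s - q * r := by ring
      rw [h1]
      exact div_pos (mul_pos hB hwim) (Complex.normSq_pos.2 hdenw)
    rw [div_eq_iff hden2] at hMob
    have hQM : (c2 : ℂ) * w * conj w + (d2 : ℂ) * conj w - (a2 : ℂ) * w - (b2 : ℂ) = 0 := by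
      linear_combination -hMob
    have hdenwu : ((-r : ℝ) : ℂ) * conj w + p ≠ 0 := by
      apply den_ne_zero' (-r) p (conj w) _ hrp0
      simp [ne_of_gt hwim]
    have hconjz : conj z = (((s : ℝ) : ℂ) * conj w + ((-q : ℝ) : ℂ))
        / (((-r : ℝ) : ℂ) * conj w + ((p : ℝ) : ℂ)) := by
      rw [hzdef]; simp [map_div₀]
    have hQnum : (c : ℂ) * (((s : ℝ) : ℂ) * w + ((-q : ℝ) : ℂ)) * (((s : ℝ) : ℂ) * conj w + ((-q : ℝ) : ℂ))
          + (d : ℂ) * (((s : ℝ) : ℂ) * conj w + ((-q : ℝ) : ℂ)) * (((-r : ℝ) : ℂ) * w + ((p : ℝ) : ℂ))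
          - (a : ℂ) * (((s : ℝ) : ℂ) * w + ((-q : ℝ) : ℂ)) * (((-r : ℝ) : ℂ) * conj w + ((p : ℝ) : ℂ))
          - (b : ℂ) * (((-r : ℝ) : ℂ) * w + ((p : ℝ) : ℂ)) * (((-r : ℝ) : ℂ) * conj w + ((p : ℝ) : ℂ)) = 0 := by
      push_cast
      linear_combination (-(w * conj w)) * hc2c - (conj w) * hd2c + w * ha2c + hb2c
        + ((p : ℂ) * s - q * r) * hQM
    have hz1 : z * (((-r : ℝ) : ℂ) * w + ((p : ℝ) : ℂ)) = ((s : ℝ) : ℂ) * w + ((-q : ℝ) : ℂ) := by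
      rw [hzdef, div_mul_cancel₀ _ hdenw]
    have hz2 : conj z * (((-r : ℝ) : ℂ) * conj w + ((p : ℝ) : ℂ))
        = ((s : ℝ) : ℂ) * conj w + ((-q : ℝ) : ℂ) := by
      rw [hconjz, div_mul_cancel₀ _ hdenwu]
    have hDD : ((((-r : ℝ) : ℂ) * w + ((p : ℝ) : ℂ)) * (((-r : ℝ) : ℂ) * conj w + ((p : ℝ) : ℂ))) ≠ 0 :=
      mul_ne_zero hdenw hdenwu
    have hQ : (c : ℂ) * z * conj z + (d : ℂ) * conj z - (a : ℂ) * z - (b : ℂ) = 0 := by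
      have hgoal : ((((-r : ℝ) : ℂ) * w + ((p : ℝ) : ℂ)) * (((-r : ℝ) : ℂ) * conj w + ((p : ℝ) : ℂ)))
            * ((c : ℂ) * z * conj z + (d : ℂ) * conj z - (a : ℂ) * z - (b : ℂ))
          = ((((-r : ℝ) : ℂ) * w + ((p : ℝ) : ℂ)) * (((-r : ℝ) : ℂ) * conj w + ((p : ℝ) : ℂ))) * 0 := by
        linear_combination ((c : ℂ) * conj z * (((-r : ℝ) : ℂ) * conj w + ((p : ℝ) : ℂ))
              - (a : ℂ) * (((-r : ℝ) : ℂ) * conj w + ((p : ℝ) : ℂ))) * hz1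
          + ((c : ℂ) * (((s : ℝ) : ℂ) * w + ((-q : ℝ) : ℂ))
              + (d : ℂ) * (((-r : ℝ) : ℂ) * w + ((p : ℝ) : ℂ))) * hz2
          + hQnum
      exact mul_left_cancel₀ hDD hgoal
    have hcd : (c : ℂ) * z + d ≠ 0 := den_ne_zero' c d z (ne_of_gt hzim) hcd0
    have hrs : (r : ℂ) * z + s ≠ 0 := den_ne_zero' r s z (ne_of_gt hzim) hrs0
    refine ⟨hwim, z, ⟨hzim, ?_⟩, ?_⟩
    · rw [div_eq_iff hcd]
      linear_combination -hQ
    · rw [eq_div_iff hrs]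
      have hgoal2 : (((-r : ℝ) : ℂ) * w + ((p : ℝ) : ℂ)) * (w * ((r : ℂ) * z + s))
          = (((-r : ℝ) : ℂ) * w + ((p : ℝ) : ℂ)) * ((p : ℂ) * z + q) := by
        have hz1' := hz1
        push_cast at hz1' ⊢
        linear_combination (w * (r : ℂ) - (p : ℂ)) * hz1'
      exact mul_left_cancel₀ hdenw hgoal2
end

section
/- Let A = !![a, b; c, d] be a 2×2 real matrix with trace zero and strictly negative determinant, let B = !![p, q; r, s] be a 2×2 real matrix with strictly positive determinant, and let z ∈ ℍ. Set w = (p·z + q)/(r·z + s) ∈ ℍ, and write B A B⁻¹ = !![a', b'; c', d']. Then (a·z + b)/(c·z + d) = conj z if and only if (a'·w + b')/(c'·w + d') = conj w. -/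
open Matrix Complex ComplexConjugate

/-- For `A = !![a, b; c, d]` with trace zero and negative determinant,
`B = !![p, q; r, s]` with positive determinant, `z ∈ ℍ` and `w = (p z + q)/(r z + s)`,
writing `B A B⁻¹ = !![a', b'; c', d']`, one has
`(a z + b)/(c z + d) = conj z ↔ (a' w + b')/(c' w + d') = conj w`. -/
theorem mobius_conjugation_equivariance
    (a b c d p q r s a' b' c' d' : ℝ) (A B : Matrix (Fin 2) (Fin 2) ℝ)
    (hA : A = !![a, b; c, d]) (hB : B = !![p, q; r, s])
    (htrace : a + d = 0) (hdetA : A.det < 0) (hdetB : 0 < B.det)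
    (hconj : B * A * B⁻¹ = !![a', b'; c', d'])
    (z : ℂ) (hz : 0 < z.im)
    (w : ℂ) (hw : w = ((p : ℂ) * z + (q : ℂ)) / ((r : ℂ) * z + (s : ℂ))) :
    ((a : ℂ) * z + (b : ℂ)) / ((c : ℂ) * z + (d : ℂ)) = conj z ↔
    ((a' : ℂ) * w + (b' : ℂ)) / ((c' : ℂ) * w + (d' : ℂ)) = conj w := by
  have hΔ : 0 < p * s - q * r := by rw [hB, Matrix.det_fin_two_of] at hdetB; exact hdetB
  have hdA : a * d - b * c < 0 := by rw [hA, Matrix.det_fin_two_of] at hdetA; exact hdetA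
  have hzim : z.im ≠ 0 := ne_of_gt hz
  -- denominators nonzero
  have hu : (r : ℂ) * z + s ≠ 0 := by
    intro h
    have h1 := congrArg Complex.im h
    have h2 := congrArg Complex.re h
    simp [Complex.add_im, Complex.add_re, Complex.mul_im, Complex.mul_re] at h1 h2
    have hr : r = 0 := by
      rcases h1 with h | h
      · exact h
      · exact absurd h hzim
    have hs : s = 0 := by rw [hr] at h2; simpa using h2
    rw [hr, hs] at hΔ; simp at hΔ
  have hubar : (r : ℂ) * (starRingEnd ℂ) z + s ≠ 0 := by
    intro h
    have h1 := congrArg Complex.im h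
    have h2 := congrArg Complex.re h
    simp [Complex.add_im, Complex.add_re, Complex.mul_im, Complex.mul_re] at h1 h2
    have hr : r = 0 := by
      rcases h1 with h | h
      · exact h
      · exact absurd h hzim
    have hs : s = 0 := by rw [hr] at h2; simpa using h2
    rw [hr, hs] at hΔ; simp at hΔ
  have hcd : (c : ℂ) * z + d ≠ 0 := by
    intro h
    have h1 := congrArg Complex.im h
    have h2 := congrArg Complex.re h
    simp [Complex.add_im, Complex.add_re, Complex.mul_im, Complex.mul_re] at h1 h2
    have hc : c = 0 := by
      rcases h1 with h | h
      · exact h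
      · exact absurd h hzim
    have hd : d = 0 := by rw [hc] at h2; simpa using h2
    rw [hc, hd] at hdA; simp at hdA
  -- imaginary part of w
  have hwim : 0 < w.im := by
    rw [hw, Complex.div_im]
    have hns : 0 < Complex.normSq ((r : ℂ) * z + s) := by
      exact Complex.normSq_pos.2 hu
    rw [div_sub_div_same, lt_div_iff₀ hns]
    simp [Complex.add_im, Complex.add_re, Complex.mul_im, Complex.mul_re]
    nlinarith [hΔ, hz]
  have hwimne : w.im ≠ 0 := ne_of_gt hwim
  -- determinant of conjugated matrix
  have hBunit : IsUnit B.det := hdetB.ne'.isUnit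
  have hdetC : a' * d' - b' * c' = a * d - b * c := by
    have h1 := congrArg Matrix.det hconj
    rw [Matrix.det_mul, Matrix.det_mul, Matrix.det_nonsing_inv, Matrix.det_fin_two_of] at h1
    rw [← h1, hA, Matrix.det_fin_two_of]
    rw [Ring.inverse_eq_inv', mul_comm (B.det), mul_assoc, mul_inv_cancel₀ hdetB.ne', mul_one]
  have hdA' : a' * d' - b' * c' < 0 := by rw [hdetC]; exact hdA
  have hC : (c' : ℂ) * w + d' ≠ 0 := by
    intro h
    have h1 := congrArg Complex.im h
    have h2 := congrArg Complex.re h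
    simp [Complex.add_im, Complex.add_re, Complex.mul_im, Complex.mul_re] at h1 h2
    have hc : c' = 0 := by
      rcases h1 with h | h
      · exact h
      · exact absurd h hwimne
    have hd : d' = 0 := by rw [hc] at h2; simpa using h2
    rw [hc, hd] at hdA'; simp at hdA'
  -- matrix relation B A = C B
  have hrel : B * A = !![a', b'; c', d'] * B := by
    rw [← hconj, Matrix.mul_assoc, Matrix.nonsing_inv_mul B hBunit, Matrix.mul_one]
  rw [hA, hB] at hrel
  have e00 := congrFun (congrFun hrel 0) 0
  have e01 := congrFun (congrFun hrel 0) 1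
  have e10 := congrFun (congrFun hrel 1) 0
  have e11 := congrFun (congrFun hrel 1) 1
  simp [Matrix.mul_apply, Fin.sum_univ_two] at e00 e01 e10 e11
  have E00 : (p : ℂ) * a + q * c = a' * p + b' * r := by exact_mod_cast congrArg (Complex.ofReal) e00
  have E01 : (p : ℂ) * b + q * d = a' * q + b' * s := by exact_mod_cast congrArg (Complex.ofReal) e01
  have E10 : (r : ℂ) * a + s * c = c' * p + d' * r := by exact_mod_cast congrArg (Complex.ofReal) e10
  have E11 : (r : ℂ) * b + s * d = c' * q + d' * s := by exact_mod_cast congrArg (Complex.ofReal) e11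
  set N : ℂ := (a : ℂ) * z + b with hN
  set D : ℂ := (c : ℂ) * z + d with hD
  have I1 : (a' : ℂ) * w + b' = ((p : ℂ) * N + q * D) / ((r : ℂ) * z + s) := by
    rw [hw]
    rw [eq_div_iff hu, add_mul, mul_assoc, div_mul_cancel₀ _ hu, hN, hD]
    linear_combination (-z) * E00 - E01
  have I2 : (c' : ℂ) * w + d' = ((r : ℂ) * N + s * D) / ((r : ℂ) * z + s) := by
    rw [hw]
    rw [eq_div_iff hu, add_mul, mul_assoc, div_mul_cancel₀ _ hu, hN, hD]
    linear_combination (-z) * E10 - E11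
  have hRD : (r : ℂ) * N + s * D ≠ 0 := by
    intro h
    rw [I2, h, zero_div] at hC
    exact hC rfl
  have hcw : (starRingEnd ℂ) w = ((p : ℂ) * (starRingEnd ℂ) z + q) / ((r : ℂ) * (starRingEnd ℂ) z + s) := by
    rw [hw, map_div₀]
    simp [Complex.conj_ofReal]
  rw [div_eq_iff hcd, I1, I2, hcw]
  have hdd : ∀ (x y u : ℂ), u ≠ 0 → (x/u)/(y/u) = x/y := by
    intro x y u hu0; field_simp
  rw [hdd _ _ _ hu, div_eq_div_iff hRD hubar]
  have hΔc : (p : ℂ) * s - q * r ≠ 0 := by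
    exact_mod_cast hΔ.ne'
  constructor
  · intro h
    rw [h]; ring
  · intro h
    have key : ((p : ℂ) * s - q * r) * N = ((p : ℂ) * s - q * r) * ((starRingEnd ℂ) z * D) := by
      linear_combination h
    exact mul_left_cancel₀ hΔc key
end

section
/- Let A = !![a, b; c, d] be a 2×2 real matrix with trace zero and strictly negative determinant, and assume c ≠ 0. Then the special geodesic S_A = {z ∈ ℍ : (a·z + b)/(c·z + d) = conj z} equals the intersection of ℍ with the circle centered at the real point a/c of radius √(−det A)/|c|; that is, S_A = {z ∈ ℍ : |z − a/c| = √(−det A)/|c|}. -/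
open Matrix Complex ComplexConjugate

/-- For `A = !![a, b; c, d]` real with trace zero, strictly negative
determinant, and `c ≠ 0`, the special geodesic `S_A` is the intersection of the upper
half-plane with the circle of center `a/c ∈ ℝ` and radius `√(−det A)/|c|`. -/
theorem special_geodesic_is_semicircle
    (a b c d : ℝ) (A : Matrix (Fin 2) (Fin 2) ℝ)
    (hA : A = !![a, b; c, d]) (htrace : a + d = 0) (hdet : A.det < 0) (hc : c ≠ 0) :
    {z : ℂ | 0 < z.im ∧ ((a : ℂ) * z + (b : ℂ)) / ((c : ℂ) * z + (d : ℂ)) = conj z} =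
    {z : ℂ | 0 < z.im ∧ ‖z - ((a / c : ℝ) : ℂ)‖ = Real.sqrt (-A.det) / |c|} := by
  have hd : d = -a := by linarith
  have hdetval : -A.det = a ^ 2 + b * c := by
    subst hA; simp [Matrix.det_fin_two_of, hd]; ring
  have hpos : 0 < a ^ 2 + b * c := by rw [← hdetval]; linarith
  have hc2 : (c : ℝ) ^ 2 ≠ 0 := pow_ne_zero _ hc
  ext z
  simp only [Set.mem_setOf_eq]
  refine and_congr_right fun hz => ?_
  have hden : (c : ℂ) * z + (d : ℂ) ≠ 0 := by
    intro h
    have him : ((c : ℂ) * z + (d : ℂ)).im = 0 := by rw [h]; simp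
    simp [Complex.add_im, Complex.mul_im] at him
    rcases him with h1 | h1
    · exact hc h1
    · exact absurd h1 (ne_of_gt hz)
  rw [div_eq_iff hden]
  have hrhs : (‖z - ((a / c : ℝ) : ℂ)‖ = Real.sqrt (-A.det) / |c|) ↔
      Complex.normSq (z - ((a / c : ℝ) : ℂ)) = (a ^ 2 + b * c) / c ^ 2 := by
    rw [hdetval]
    have h1 : Real.sqrt (a ^ 2 + b * c) / |c| = Real.sqrt ((a ^ 2 + b * c) / c ^ 2) := by
      rw [Real.sqrt_div hpos.le, Real.sqrt_sq_eq_abs]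
    rw [h1, Complex.norm_def]
    exact Real.sqrt_inj (Complex.normSq_nonneg _) (by positivity)
  rw [hrhs]
  have hkey : ((a : ℂ) * z + (b : ℂ) = conj z * ((c : ℂ) * z + (d : ℂ))) ↔
      c * (z.re ^ 2 + z.im ^ 2) = 2 * a * z.re + b := by
    rw [Complex.ext_iff]
    simp only [Complex.add_re, Complex.add_im, Complex.mul_re, Complex.mul_im,
      Complex.conj_re, Complex.conj_im, Complex.ofReal_re, Complex.ofReal_im, hd,
      mul_zero, zero_mul, sub_zero, add_zero, zero_add]
    constructor
    · rintro ⟨h1, _⟩; nlinarith [h1]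
    · intro h; constructor
      · nlinarith [h]
      · ring
  rw [hkey, Complex.normSq_apply]
  simp only [Complex.sub_re, Complex.sub_im, Complex.ofReal_re, Complex.ofReal_im, sub_zero]
  rw [eq_div_iff hc2]
  constructor
  · intro h
    field_simp
    linear_combination c * h
  · intro h
    field_simp at h
    apply mul_left_cancel₀ hc
    apply mul_left_cancel₀ hc
    apply mul_left_cancel₀ hc
    linear_combination c ^ 2 * h
end

section
/- Let A = !![a, b; c, d] be a 2×2 real matrix with trace zero and strictly negative determinant. Then the special geodesic S_A = {z ∈ ℍ : (a·z + b)/(c·z + d) = conj z} is an infinite set (in particular, nonempty). -/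
open Matrix Complex ComplexConjugate

/-- For `A = !![a, b; c, d]` real with trace zero and strictly negative
determinant, the special geodesic `S_A` is an infinite set (in particular, nonempty). -/
theorem special_geodesic_infinite
    (a b c d : ℝ) (A : Matrix (Fin 2) (Fin 2) ℝ)
    (hA : A = !![a, b; c, d]) (htrace : a + d = 0) (hdet : A.det < 0) :
    {z : ℂ | 0 < z.im ∧ ((a : ℂ) * z + (b : ℂ)) / ((c : ℂ) * z + (d : ℂ)) = conj z}.Infinite ∧
    {z : ℂ | 0 < z.im ∧ ((a : ℂ) * z + (b : ℂ)) / ((c : ℂ) * z + (d : ℂ)) = conj z}.Nonempty := by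
  subst hA
  rw [Matrix.det_fin_two_of] at hdet
  have hd : d = -a := by linarith
  subst hd
  have hpos : 0 < a ^ 2 + b * c := by nlinarith
  have key : ∀ x y : ℝ, 0 < y → c * (x ^ 2 + y ^ 2) = 2 * a * x + b →
      ((x : ℂ) + (y : ℂ) * I) ∈ {z : ℂ | 0 < z.im ∧
        ((a : ℂ) * z + (b : ℂ)) / ((c : ℂ) * z + ((-a : ℝ) : ℂ)) = conj z} := by
    intro x y hy hxy
    constructor
    · simp [hy]
    · have hw : (c : ℂ) * ((x : ℂ) + (y : ℂ) * I) + ((-a : ℝ) : ℂ) ≠ 0 := by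
        rcases eq_or_ne c 0 with hc | hc
        · subst hc
          have ha : a ≠ 0 := by intro h; rw [h] at hpos; nlinarith
          simp [ha]
        · intro h
          have := congrArg Complex.im h
          simp at this
          rcases this with h1 | h1
          · exact hc h1
          · exact hy.ne' h1
      rw [div_eq_iff hw]
      simp only [Complex.ext_iff, map_add, _root_.map_mul, conj_ofReal, conj_I]
      constructor <;> simp <;> nlinarith [hxy]
  have hinf : {z : ℂ | 0 < z.im ∧
      ((a : ℂ) * z + (b : ℂ)) / ((c : ℂ) * z + ((-a : ℝ) : ℂ)) = conj z}.Infinite := by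
    rcases eq_or_ne c 0 with hc | hc
    · -- vertical line x = -b/(2a)
      have ha : a ≠ 0 := by intro h; rw [h, hc] at hpos; nlinarith
      apply Set.infinite_of_injective_forall_mem
        (f := fun n : ℕ => ((-b / (2 * a) : ℝ) : ℂ) + ((n + 1 : ℝ) : ℂ) * I)
      · intro m n hmn
        have := congrArg Complex.im hmn
        simp at this
        exact_mod_cast this
      · intro n
        apply key
        · positivity
        · rw [hc]; field_simp; ring
    · -- circle with center (a/c, 0), radius r
      set r : ℝ := Real.sqrt ((a ^ 2 + b * c) / c ^ 2) with hr
      have hr0 : 0 < r := Real.sqrt_pos.mpr (by positivity)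
      have hr2 : r ^ 2 = (a ^ 2 + b * c) / c ^ 2 := Real.sq_sqrt (by positivity)
      have hr2' : c ^ 2 * r ^ 2 = a ^ 2 + b * c := by
        rw [hr2]; field_simp
      set X : ℕ → ℝ := fun n => a / c + r * (1 - ((n:ℝ) + 1) ^ 2) / (1 + ((n:ℝ) + 1) ^ 2) with hX
      set Y : ℕ → ℝ := fun n => 2 * r * ((n:ℝ) + 1) / (1 + ((n:ℝ) + 1) ^ 2) with hY
      apply Set.infinite_of_injective_forall_mem
        (f := fun n : ℕ => ((X n : ℝ) : ℂ) + ((Y n : ℝ) : ℂ) * I)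
      · intro m n hmn
        have h : X m = X n := by
          have := congrArg Complex.re hmn
          simpa using this
        have hm1 : (0:ℝ) < 1 + ((m:ℝ) + 1) ^ 2 := by positivity
        have hn1 : (0:ℝ) < 1 + ((n:ℝ) + 1) ^ 2 := by positivity
        rw [hX] at h
        simp only at h
        have h2 : ((m:ℝ) + 1) ^ 2 = ((n:ℝ) + 1) ^ 2 := by
          field_simp at h
          have h' : (c * r) * (((n:ℝ) + 1) ^ 2 - ((m:ℝ) + 1) ^ 2) = 0 := by
            linear_combination h / 2
          rcases mul_eq_zero.1 h' with h'' | h''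
          · exact absurd h'' (mul_ne_zero hc hr0.ne')
          · linarith
        have h3 : (m:ℝ) = (n:ℝ) := by nlinarith [h2]
        exact_mod_cast h3
      · intro n
        have hn1 : (0:ℝ) < 1 + ((n:ℝ) + 1) ^ 2 := by positivity
        have hPQ : (X n - a / c) ^ 2 + (Y n) ^ 2 = r ^ 2 := by
          rw [hX, hY]
          simp only
          field_simp
          ring
        apply key
        · rw [hY]; simp only; positivity
        · have hgoal : c * ((X n) ^ 2 + (Y n) ^ 2) - (2 * a * (X n) + b)
              = c * ((X n - a / c) ^ 2 + (Y n) ^ 2 - r ^ 2)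
                + (c ^ 2 * r ^ 2 - (a ^ 2 + b * c)) / c := by
            field_simp
            ring
          have : c * ((X n) ^ 2 + (Y n) ^ 2) - (2 * a * (X n) + b) = 0 := by
            rw [hgoal, hPQ, hr2']
            simp
          linarith [this]
  exact ⟨hinf, hinf.nonempty⟩
end

section
/- Let f and g be nonzero polynomials in two variables over ℂ (elements of MvPolynomial (Fin 2) ℂ) that have no common nonconstant factor (i.e., every common divisor of f and g is a unit). Then the set of common zeros {p ∈ ℂ × ℂ : f(p) = 0 and g(p) = 0} is finite. -/
open MvPolynomial

set_option maxHeartbeats 1000000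

/-- A nonzero polynomial in one variable (as an `MvPolynomial (Fin 1)`) over `ℂ`
has finitely many zeros. -/
lemma finite_zero_mv1 (d : MvPolynomial (Fin 1) ℂ) (hd : d ≠ 0) :
    {z : ℂ | MvPolynomial.eval ![z] d = 0}.Finite := by
  set e := MvPolynomial.finSuccEquiv ℂ 0 d with he
  have he0 : e ≠ 0 := by
    intro h
    apply hd
    have := congrArg (MvPolynomial.finSuccEquiv ℂ 0).symm (he.symm.trans h)
    simpa using this
  have hinj : Function.Injective (MvPolynomial.eval (![] : Fin 0 → ℂ)) := by
    intro a b hab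
    obtain ⟨a, rfl⟩ := MvPolynomial.C_surjective (Fin 0) a
    obtain ⟨b, rfl⟩ := MvPolynomial.C_surjective (Fin 0) b
    simpa using hab
  have h2 : Polynomial.map (MvPolynomial.eval (![] : Fin 0 → ℂ)) e ≠ 0 := by
    intro h
    apply he0
    apply Polynomial.map_injective _ hinj
    simpa using h
  refine (Polynomial.finite_setOf_isRoot h2).subset ?_
  intro z hz
  simp only [Set.mem_setOf_eq] at hz ⊢
  have key := MvPolynomial.eval_eq_eval_mv_eval' (![] : Fin 0 → ℂ) z d
  have hc : (Fin.cons z (![] : Fin 0 → ℂ) : Fin 1 → ℂ) = ![z] := rfl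
  rw [hc] at key
  rw [Polynomial.IsRoot, ← key]
  exact hz

/-- Bezout-type identity for relatively prime polynomials over a UFD. -/
lemma bezout_of_relPrime {R : Type*} [CommRing R] [IsDomain R]
    [UniqueFactorizationMonoid R] (f' g' : Polynomial R) (hf' : f' ≠ 0)
    (hrel : ∀ h : Polynomial R, h ∣ f' → h ∣ g' → IsUnit h) :
    ∃ (A B : Polynomial R) (d : R), d ≠ 0 ∧ A * f' + B * g' = Polynomial.C d := by
  classical
  letI : NormalizationMonoid R := UniqueFactorizationMonoid.normalizationMonoid.toNormalizationMonoid
  letI : NormalizedGCDMonoid R := UniqueFactorizationMonoid.toNormalizedGCDMonoid R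
  set K := FractionRing R
  set F := f'.map (algebraMap R K) with hFdef
  set G := g'.map (algebraMap R K) with hGdef
  have hmapinj : Function.Injective (Polynomial.map (algebraMap R K)) :=
    Polynomial.map_injective _ (IsFractionRing.injective R K)
  have hF : F ≠ 0 := by
    intro h; apply hf'; apply hmapinj; simpa [hFdef] using h
  -- coprimality in K[X]
  have hFG : IsCoprime F G := by
    apply IsRelPrime.isCoprime
    intro h hdF hdG
    by_contra hu
    have h0 : h ≠ 0 := by
      intro hh
      rw [hh] at hdF
      exact hF (zero_dvd_iff.mp hdF)
    obtain ⟨q, hqirr, hqdvd⟩ := WfDvdMonoid.exists_irreducible_factor hu h0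
    have hqF : q ∣ F := hqdvd.trans hdF
    have hqG : q ∣ G := hqdvd.trans hdG
    have hq0 : q ≠ 0 := hqirr.ne_zero
    obtain ⟨b, hb⟩ := IsLocalization.integerNormalization_map_to_map
      (nonZeroDivisors R) q
    set q₀ := IsLocalization.integerNormalization (nonZeroDivisors R) q with hq₀def
    have hb' : q₀.map (algebraMap R K) = Polynomial.C (algebraMap R K (b : R)) * q := by
      rw [hb, Algebra.smul_def, Polynomial.algebraMap_apply]
    have hbne : algebraMap R K (b : R) ≠ 0 :=
      IsFractionRing.to_map_ne_zero_of_mem_nonZeroDivisors b.2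
    have hq₀0 : q₀ ≠ 0 := by
      intro h
      rw [h, Polynomial.map_zero] at hb'
      exact (mul_ne_zero (fun hc => hbne (Polynomial.C_eq_zero.mp hc)) hq0) hb'.symm
    set p := q₀.primPart with hpdef
    have hp : p.IsPrimitive := Polynomial.isPrimitive_primPart q₀
    have hcont : (q₀.content : R) ≠ 0 := fun h =>
      hq₀0 (Polynomial.content_eq_zero_iff.mp h)
    have hcont' : algebraMap R K q₀.content ≠ 0 := fun h =>
      hcont ((map_eq_zero_iff _ (IsFractionRing.injective R K)).mp h)
    have hsplit : Polynomial.C (algebraMap R K q₀.content) *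
        p.map (algebraMap R K) = Polynomial.C (algebraMap R K (b : R)) * q := by
      rw [← hb']
      conv_rhs => rw [q₀.eq_C_content_mul_primPart]
      rw [Polynomial.map_mul, Polynomial.map_C]
    have hassoc : Associated (p.map (algebraMap R K)) q := by
      have h1 : Associated (p.map (algebraMap R K))
          (Polynomial.C (algebraMap R K q₀.content) * p.map (algebraMap R K)) :=
        (associated_unit_mul_left _ _ (Polynomial.isUnit_C.mpr hcont'.isUnit)).symm
      have h2 : Associated (Polynomial.C (algebraMap R K (b : R)) * q) q :=
        associated_unit_mul_left _ _ (Polynomial.isUnit_C.mpr hbne.isUnit)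
      exact (h1.trans (hsplit ▸ Associated.refl _)).trans h2
    -- p divides any nonzero w whose image is divisible by q
    have hdvd : ∀ w : Polynomial R, w ≠ 0 → q ∣ w.map (algebraMap R K) → p ∣ w := by
      intro w hw hqw
      have hwc : algebraMap R K w.content ≠ 0 := fun h =>
        (fun hc => hw (Polynomial.content_eq_zero_iff.mp hc))
          ((map_eq_zero_iff _ (IsFractionRing.injective R K)).mp h)
      have hsplitw : w.map (algebraMap R K) = Polynomial.C (algebraMap R K w.content) *
          w.primPart.map (algebraMap R K) := by
        conv_lhs => rw [w.eq_C_content_mul_primPart]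
        rw [Polynomial.map_mul, Polynomial.map_C]
      have h1 : p.map (algebraMap R K) ∣ w.map (algebraMap R K) :=
        (hassoc.dvd_iff_dvd_left).mpr hqw
      rw [hsplitw] at h1
      have h2 : p.map (algebraMap R K) ∣ w.primPart.map (algebraMap R K) :=
        ((associated_unit_mul_left _ _
          (Polynomial.isUnit_C.mpr hwc.isUnit)).dvd_iff_dvd_right).mp h1
      have h3 : p ∣ w.primPart :=
        hp.dvd_of_fraction_map_dvd_fraction_map h2
      exact h3.trans w.primPart_dvd
    have hpf : p ∣ f' := by
      rcases eq_or_ne g' 0 with hg0 | hg0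
      · exact hdvd f' hf' hqF
      · exact hdvd f' hf' hqF
    have hpg : p ∣ g' := by
      rcases eq_or_ne g' 0 with hg0 | hg0
      · exact hg0 ▸ dvd_zero p
      · exact hdvd g' hg0 hqG
    have hpunit : IsUnit p := hrel p hpf hpg
    have : IsUnit q := hassoc.isUnit (hpunit.map (Polynomial.mapRingHom (algebraMap R K)))
    exact hqirr.not_isUnit this
  -- clear denominators
  obtain ⟨a, b, hab⟩ := hFG
  obtain ⟨da, hda⟩ := IsLocalization.integerNormalization_map_to_map (nonZeroDivisors R) a
  obtain ⟨db, hdb⟩ := IsLocalization.integerNormalization_map_to_map (nonZeroDivisors R) b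
  set A := IsLocalization.integerNormalization (nonZeroDivisors R) a with hAdef
  set B := IsLocalization.integerNormalization (nonZeroDivisors R) b with hBdef
  have hda' : A.map (algebraMap R K) = Polynomial.C (algebraMap R K (da : R)) * a := by
    rw [hda, Algebra.smul_def, Polynomial.algebraMap_apply]
  have hdb' : B.map (algebraMap R K) = Polynomial.C (algebraMap R K (db : R)) * b := by
    rw [hdb, Algebra.smul_def, Polynomial.algebraMap_apply]
  refine ⟨Polynomial.C (db : R) * A, Polynomial.C (da : R) * B, (da : R) * (db : R),
    mul_ne_zero (nonZeroDivisors.ne_zero da.2) (nonZeroDivisors.ne_zero db.2), ?_⟩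
  apply hmapinj
  rw [Polynomial.map_add, Polynomial.map_mul, Polynomial.map_mul, Polynomial.map_mul,
    Polynomial.map_mul, Polynomial.map_C, Polynomial.map_C, Polynomial.map_C,
    hda', hdb', map_mul, Polynomial.C_mul]
  calc Polynomial.C (algebraMap R K (db : R)) *
        (Polynomial.C (algebraMap R K (da : R)) * a) * F +
        Polynomial.C (algebraMap R K (da : R)) *
        (Polynomial.C (algebraMap R K (db : R)) * b) * G
      = Polynomial.C (algebraMap R K (da : R)) * Polynomial.C (algebraMap R K (db : R)) *
        (a * F + b * G) := by ring
    _ = Polynomial.C (algebraMap R K (da : R)) * Polynomial.C (algebraMap R K (db : R)) := by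
        rw [hab, mul_one]

/-- Key lemma: the set of possible second coordinates of common zeros is finite. -/
lemma aux_snd (f g : MvPolynomial (Fin 2) ℂ) (hf : f ≠ 0) (hg : g ≠ 0)
    (hcop : ∀ h : MvPolynomial (Fin 2) ℂ, h ∣ f → h ∣ g → IsUnit h) :
    {z : ℂ | ∃ y : ℂ, MvPolynomial.eval ![y, z] f = 0 ∧
      MvPolynomial.eval ![y, z] g = 0}.Finite := by
  set φ := MvPolynomial.finSuccEquiv ℂ 1 with hφ
  set f' := φ f with hf'def
  set g' := φ g with hg'def
  have hf' : f' ≠ 0 := by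
    intro h; apply hf
    have := congrArg φ.symm h; simpa [hf'def] using this
  have hrel : ∀ h : Polynomial (MvPolynomial (Fin 1) ℂ), h ∣ f' → h ∣ g' → IsUnit h := by
    intro h h1 h2
    have h1' : φ.symm h ∣ f := by
      have := map_dvd φ.symm h1
      simpa [hf'def] using this
    have h2' : φ.symm h ∣ g := by
      have := map_dvd φ.symm h2
      simpa [hg'def] using this
    have := (hcop _ h1' h2').map φ
    simpa using this
  obtain ⟨A, B, d0, hd0, key⟩ := bezout_of_relPrime f' g' hf' hrel
  refine (finite_zero_mv1 d0 hd0).subset ?_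
  rintro z ⟨y, hfz, hgz⟩
  simp only [Set.mem_setOf_eq]
  have h1 : Polynomial.eval y (Polynomial.map (MvPolynomial.eval ![z]) f') = 0 := by
    rw [← MvPolynomial.eval_eq_eval_mv_eval' ![z] y f]
    exact hfz
  have h2 : Polynomial.eval y (Polynomial.map (MvPolynomial.eval ![z]) g') = 0 := by
    rw [← MvPolynomial.eval_eq_eval_mv_eval' ![z] y g]
    exact hgz
  have := congrArg (fun P : Polynomial (MvPolynomial (Fin 1) ℂ) =>
    Polynomial.eval y (Polynomial.map (MvPolynomial.eval ![z]) P)) key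
  simpa [Polynomial.map_add, Polynomial.map_mul, Polynomial.map_C, h1, h2] using this.symm

/-- Two nonzero polynomials in two variables over `ℂ` with no common
nonconstant factor (every common divisor is a unit) have a finite set of common zeros. -/
theorem coprime_plane_curves_finite_intersection
    (f g : MvPolynomial (Fin 2) ℂ) (hf : f ≠ 0) (hg : g ≠ 0)
    (hcop : ∀ h : MvPolynomial (Fin 2) ℂ, h ∣ f → h ∣ g → IsUnit h) :
    {p : ℂ × ℂ | MvPolynomial.eval ![p.1, p.2] f = 0 ∧
      MvPolynomial.eval ![p.1, p.2] g = 0}.Finite := by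
  set σ := Equiv.swap (0 : Fin 2) 1 with hσ
  set e := MvPolynomial.renameEquiv ℂ σ with hedef
  have heapp : ∀ w : MvPolynomial (Fin 2) ℂ, e w = MvPolynomial.rename σ w := fun _ => rfl
  have hf₂ : MvPolynomial.rename σ f ≠ 0 := fun h =>
    hf (MvPolynomial.rename_injective _ σ.injective (by simpa using h))
  have hg₂ : MvPolynomial.rename σ g ≠ 0 := fun h =>
    hg (MvPolynomial.rename_injective _ σ.injective (by simpa using h))
  have hcop₂ : ∀ h : MvPolynomial (Fin 2) ℂ,
      h ∣ MvPolynomial.rename σ f → h ∣ MvPolynomial.rename σ g → IsUnit h := by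
    intro h h1 h2
    rw [← heapp] at h1 h2
    have h1' : e.symm h ∣ f := by
      have := map_dvd e.symm h1
      simpa using this
    have h2' : e.symm h ∣ g := by
      have := map_dvd e.symm h2
      simpa using this
    have := (hcop _ h1' h2').map e
    simpa using this
  have hswap : ∀ (x z : ℂ) (w : MvPolynomial (Fin 2) ℂ),
      MvPolynomial.eval ![x, z] (MvPolynomial.rename σ w) = MvPolynomial.eval ![z, x] w := by
    intro x z w
    rw [MvPolynomial.eval_rename]
    have hc : (![x, z] ∘ σ) = ![z, x] := by
      funext i
      fin_cases i <;> simp [hσ, Equiv.swap_apply_def]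
    rw [hc]
  have S₂ := aux_snd f g hf hg hcop
  have S₁ := aux_snd _ _ hf₂ hg₂ hcop₂
  refine (S₁.prod S₂).subset ?_
  rintro ⟨x, z⟩ ⟨h1, h2⟩
  constructor
  · exact ⟨z, by rw [hswap]; exact h1, by rw [hswap]; exact h2⟩
  · exact ⟨x, h1, h2⟩
end
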